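/- Let X and Y be real Banach spaces (no approximation property hypothesis). If T : X → Y is a continuous linear operator such that the composition π_Y ∘ T : X → Y** (where π_Y is the canonical isometric embedding of Y into its bidual) compactly factors through the space ℓ², then T itself compactly factors through ℓ²; that is, there exist compact operators A : X → ℓ² and B : ℓ² → Y with T = B ∘ A. (This holds because every closed subspace of a Hilbert space is complemented.) -/

import Mathlib

open NormedSpace

/-- An operator `T : X → Y` compactly factors through `F` if `T = B ∘ A` for some
compact operators `A : X → F` and `B : F → Y`. -/
def CompactlyFactorsThrough (F : Type*) [NormedAddCommGroup F] [NormedSpace ℝ F]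
    (X Y : Type*) [NormedAddCommGroup X] [NormedSpace ℝ X]
    [NormedAddCommGroup Y] [NormedSpace ℝ Y] (T : X →L[ℝ] Y) : Prop :=
  ∃ (A : X →L[ℝ] F) (B : F →L[ℝ] Y),
    IsCompactOperator A ∧ IsCompactOperator B ∧ T = B.comp A

theorem l2_factorization
    (X Y : Type*) [NormedAddCommGroup X] [NormedSpace ℝ X] [CompleteSpace X]
    [NormedAddCommGroup Y] [NormedSpace ℝ Y] [CompleteSpace Y]
    (T : X →L[ℝ] Y)
    (hT : CompactlyFactorsThrough (lp (fun _ : ℕ => ℝ) 2)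
      X (StrongDual ℝ (StrongDual ℝ Y)) ((inclusionInDoubleDual ℝ Y).comp T)) :
    CompactlyFactorsThrough (lp (fun _ : ℕ => ℝ) 2) X Y T := by
  classical
  obtain ⟨A, B, hA, hB, hTB⟩ := hT
  set E := lp (fun _ : ℕ => ℝ) 2
  set ι : Y →ₗᵢ[ℝ] StrongDual ℝ (StrongDual ℝ Y) := inclusionInDoubleDualLi ℝ (E := Y) with hι
  -- the closure of the range of A
  set M : Submodule ℝ E := (LinearMap.range (A : X →ₗ[ℝ] E)).topologicalClosure with hM
  have hMclosed : IsClosed (M : Set E) :=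
    Submodule.isClosed_topologicalClosure _
  haveI : CompleteSpace M := hMclosed.completeSpace_coe
  -- the range of ι is closed
  have hιclosed : IsClosed (LinearMap.range ι.toLinearMap : Set (StrongDual ℝ (StrongDual ℝ Y))) := by
    have h : IsComplete (Set.range ι) :=
      (completeSpace_iff_isComplete_range ι.isometry.isUniformInducing).1 ‹_›
    rw [LinearMap.coe_range]
    exact h.isClosed
  -- B maps M into the range of ι
  have hBA : ∀ x : X, B (A x) = ι (T x) := by
    intro x
    have := congrArg (fun f => f x) hTB
    exact (by simpa using this.symm : B (A x) = inclusionInDoubleDual ℝ Y (T x))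
  have hBM : ∀ m : E, m ∈ M → B m ∈ LinearMap.range ι.toLinearMap := by
    intro m hm
    have hm' : m ∈ closure ((LinearMap.range (A : X →ₗ[ℝ] E) : Set E)) := hm
    have h1 : B m ∈ closure (B '' (LinearMap.range (A : X →ₗ[ℝ] E) : Set E)) :=
      map_mem_closure B.continuous hm' (fun y hy => Set.mem_image_of_mem _ hy)
    refine closure_minimal ?_ hιclosed h1
    rintro _ ⟨y, ⟨x, rfl⟩, rfl⟩
    exact ⟨T x, (hBA x).symm⟩
  -- construct B'
  let P : E →L[ℝ] M := M.orthogonalProjectionOnto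
  let Bc : E →L[ℝ] StrongDual ℝ (StrongDual ℝ Y) := B.comp (M.subtypeL.comp P)
  have hmem : ∀ y : E, Bc y ∈ LinearMap.range ι.toLinearMap := fun y =>
    hBM _ (P y).2
  let Bres : E →L[ℝ] LinearMap.range ι.toLinearMap :=
    Bc.codRestrict _ hmem
  letI : SeminormedAddCommGroup (LinearMap.range ι.toLinearMap) :=
    @Submodule.seminormedAddCommGroup ℝ _ Real.instRing ContinuousLinearMap.toSeminormedAddCommGroup ContinuousLinearMap.module (LinearMap.range ι.toLinearMap)
  let e : Y ≃ₗᵢ[ℝ] LinearMap.range ι.toLinearMap := ι.equivRange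
  let einv : (LinearMap.range ι.toLinearMap) →L[ℝ] Y :=
    e.symm.toContinuousLinearEquiv.toContinuousLinearMap
  refine ⟨A, einv.comp Bres, hA, ?_, ?_⟩
  · -- compactness of einv ∘ Bres
    have hBc : IsCompactOperator Bc := hB.comp_clm (M.subtypeL.comp P)
    have hBres : IsCompactOperator Bres := hBc.codRestrict hmem hιclosed
    exact hBres.clm_comp einv
  · ext x
    have hPAx : P (A x) = ⟨A x, Submodule.le_topologicalClosure _ ⟨x, rfl⟩⟩ := by
      exact Submodule.orthogonalProjectionOnto_mem_subspace_eq_self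
        (⟨A x, Submodule.le_topologicalClosure _ ⟨x, rfl⟩⟩ : M)
    have hBcAx : Bc (A x) = ι (T x) := by
      simp only [Bc, ContinuousLinearMap.comp_apply, hPAx, Submodule.subtypeL_apply]
      exact hBA x
    have : Bres (A x) = e (T x) := by
      apply Subtype.ext
      simp only [Bres, ContinuousLinearMap.coe_codRestrict_apply, hBcAx]
      simp [e, LinearIsometry.equivRange_apply_coe]
    simp only [ContinuousLinearMap.comp_apply, this]
    simp [einv]
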